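/- arXiv:2401.03659 — 2 statements merged into one kernel-verified Lean document; each statement's English description precedes it below -/
import Mathlib

section
/- For all complex z not on the negative real axis (−∞,0) and all α ∈ (0,1), one has z^α = (sin(απ)/π) ∫₀^∞ z y^{α−1}/(y+z) dy, where z^α denotes the principal branch. -/
open MeasureTheory Set Real Filter

/-- Integrability of `y^(α-1) * (1+y)^(-p)` on `(0,∞)` when `0 < α < p`. -/
lemma aux_integrable_bound {α p : ℝ} (hα : 0 < α) (hp : α < p) :
    IntegrableOn (fun y : ℝ => y ^ (α - 1) * (1 + y) ^ (-p)) (Set.Ioi 0) := by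
  have hmeas : ∀ s : Set ℝ, MeasurableSet s → s ⊆ Set.Ioi 0 →
      AEStronglyMeasurable (fun y : ℝ => y ^ (α - 1) * (1 + y) ^ (-p))
        (volume.restrict s) := by
    intro s hs hsub
    refine (ContinuousOn.aestronglyMeasurable ?_ hs)
    intro y hy
    have hy0 : 0 < y := hsub hy
    have h1 : 0 < 1 + y := by linarith
    exact ((Real.continuousAt_rpow_const _ _ (Or.inl hy0.ne')).continuousWithinAt.mul
      (((continuous_const.add continuous_id).continuousAt.rpow_const
        (Or.inl h1.ne')).continuousWithinAt))
  have h1 : IntegrableOn (fun y : ℝ => y ^ (α - 1) * (1 + y) ^ (-p)) (Set.Ioc 0 1) := by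
    have hbase : IntegrableOn (fun y : ℝ => y ^ (α - 1)) (Set.Ioc 0 1) := by
      have := intervalIntegral.intervalIntegrable_rpow' (a := 0) (b := 1) (r := α - 1) (by linarith)
      rwa [intervalIntegrable_iff_integrableOn_Ioc_of_le zero_le_one] at this
    refine hbase.mono' (hmeas _ measurableSet_Ioc Set.Ioc_subset_Ioi_self) ?_
    filter_upwards [ae_restrict_mem measurableSet_Ioc] with y hy
    have hy0 : 0 < y := hy.1
    have h1y : (1:ℝ) ≤ 1 + y := by linarith
    rw [Real.norm_eq_abs, abs_mul, abs_of_nonneg (Real.rpow_nonneg hy0.le _),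
      abs_of_nonneg (Real.rpow_nonneg (by linarith) _)]
    calc y ^ (α - 1) * (1 + y) ^ (-p) ≤ y ^ (α - 1) * 1 := by
          refine mul_le_mul_of_nonneg_left ?_ (Real.rpow_nonneg hy0.le _)
          calc (1 + y) ^ (-p) ≤ (1:ℝ) ^ (-p) :=
                Real.rpow_le_rpow_of_nonpos one_pos h1y (by linarith)
            _ = 1 := Real.one_rpow _
      _ = y ^ (α - 1) := mul_one _
  have h2 : IntegrableOn (fun y : ℝ => y ^ (α - 1) * (1 + y) ^ (-p)) (Set.Ioi 1) := by
    have hbase : IntegrableOn (fun y : ℝ => y ^ (α - 1 - p)) (Set.Ioi 1) :=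
      integrableOn_Ioi_rpow_of_lt (by linarith) one_pos
    refine hbase.mono' (hmeas _ measurableSet_Ioi (Set.Ioi_subset_Ioi zero_le_one)) ?_
    filter_upwards [ae_restrict_mem measurableSet_Ioi] with y hy
    have hy1 : (1:ℝ) < y := hy
    have hy0 : 0 < y := by linarith
    rw [Real.norm_eq_abs, abs_mul, abs_of_nonneg (Real.rpow_nonneg hy0.le _),
      abs_of_nonneg (Real.rpow_nonneg (by linarith) _)]
    calc y ^ (α - 1) * (1 + y) ^ (-p) ≤ y ^ (α - 1) * y ^ (-p) := by
          refine mul_le_mul_of_nonneg_left ?_ (Real.rpow_nonneg hy0.le _)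
          exact Real.rpow_le_rpow_of_nonpos hy0 (by linarith) (by linarith)
      _ = y ^ (α - 1 - p) := by rw [← Real.rpow_add hy0]; ring_nf
  have : Set.Ioi (0:ℝ) ⊆ Set.Ioc 0 1 ∪ Set.Ioi 1 := by
    intro y hy
    rcases le_or_gt y 1 with h | h
    · exact Or.inl ⟨hy, h⟩
    · exact Or.inr h
  exact (h1.union h2).mono_set this

/-- `∫₀^∞ y^(α−1)/(1+y) dy = π / sin (π α)` for `0 < α < 1`, complex version. -/
lemma aux_beta {α : ℝ} (h0 : 0 < α) (h1 : α < 1) :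
    ∫ y in Set.Ioi (0:ℝ), (y:ℂ) ^ ((α:ℂ) - 1) / (1 + (y:ℂ)) =
      ↑π / Complex.sin (↑π * ↑α) := by
  have himg : (fun t : ℝ => t / (1 - t)) '' (Set.Ioo 0 1) = Set.Ioi 0 := by
    ext y
    constructor
    · rintro ⟨t, ⟨ht0, ht1⟩, rfl⟩
      exact div_pos ht0 (by linarith)
    · intro hy
      have hy0 : 0 < y := hy
      refine ⟨y / (1 + y), ⟨div_pos hy0 (by linarith), ?_⟩, ?_⟩
      · rw [div_lt_one (by linarith)]; linarith
      · field_simp; ring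
  have hderiv : ∀ t ∈ Set.Ioo (0:ℝ) 1,
      HasDerivWithinAt (fun t : ℝ => t / (1 - t)) (((1 - t) ^ 2)⁻¹) (Set.Ioo 0 1) t := by
    intro t ht
    have h1t : (1:ℝ) - t ≠ 0 := by have := ht.2; intro h; linarith [ht.2]
    have : HasDerivAt (fun t : ℝ => t / (1 - t)) ((1 * (1 - t) - t * (0 - 1)) / (1 - t) ^ 2) t :=
      (hasDerivAt_id t).div ((hasDerivAt_const t 1).sub (hasDerivAt_id t)) h1t
    refine this.hasDerivWithinAt.congr_deriv ?_
    rw [div_eq_mul_inv]; ring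
  have hinj : Set.InjOn (fun t : ℝ => t / (1 - t)) (Set.Ioo 0 1) := by
    intro a ha b hb h
    have ha1 : (1:ℝ) - a ≠ 0 := by have := ha.2; intro hx; linarith
    have hb1 : (1:ℝ) - b ≠ 0 := by have := hb.2; intro hx; linarith
    field_simp at h
    nlinarith [h]
  have key : ∫ y in Set.Ioi (0:ℝ), (y:ℂ) ^ ((α:ℂ) - 1) / (1 + (y:ℂ)) =
      ∫ t in Set.Ioo (0:ℝ) 1, (↑(t ^ (α-1) * (1-t) ^ (-α)) : ℂ) := by
    rw [← himg, integral_image_eq_integral_abs_deriv_smul measurableSet_Ioo hderiv hinj]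
    refine setIntegral_congr_fun measurableSet_Ioo ?_
    intro t ht
    have ht0 : 0 < t := ht.1
    have ht1 : 0 < 1 - t := by linarith [ht.2]
    have hx0 : 0 ≤ t / (1 - t) := (div_pos ht0 ht1).le
    have e1 : ((t / (1-t) : ℝ) : ℂ) ^ ((α:ℂ) - 1) = ((((t/(1-t)) ^ (α-1) : ℝ)) : ℂ) := by
      rw [Complex.ofReal_cpow hx0]
      push_cast
      ring_nf
    have e2 : (1 : ℂ) + ((t / (1-t) : ℝ) : ℂ) = (((1 + t/(1-t) : ℝ)) : ℂ) := by push_cast; ring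
    dsimp only
    rw [e1, e2, ← Complex.ofReal_div, Complex.real_smul, ← Complex.ofReal_mul]
    congr 1
    have h1px : 1 + t / (1 - t) = (1 - t)⁻¹ := by field_simp; ring
    have hxr : (t / (1-t)) ^ (α-1) = t ^ (α-1) * (1-t) ^ (1-α) := by
      rw [Real.div_rpow ht0.le ht1.le, div_eq_mul_inv, ← Real.rpow_neg ht1.le]
      ring_nf
    have h2 : (((1-t)^2)⁻¹ : ℝ) = (1-t) ^ (-2:ℝ) := by
      rw [← Real.rpow_natCast (1-t) 2, ← Real.rpow_neg ht1.le]
      norm_num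
    rw [abs_of_nonneg (by positivity), h1px, hxr, div_eq_mul_inv, inv_inv, h2]
    calc (1-t) ^ (-2:ℝ) * (t ^ (α-1) * (1-t) ^ (1-α) * (1-t))
        = t ^ (α-1) * ((1-t) ^ (-2:ℝ) * (1-t) ^ (1-α) * (1-t) ^ (1:ℝ)) := by
          rw [Real.rpow_one]; ring
      _ = t ^ (α-1) * (1-t) ^ (-2 + (1-α) + 1) := by
          rw [← Real.rpow_add ht1, ← Real.rpow_add ht1]
      _ = t ^ (α-1) * (1-t) ^ (-α) := by ring_nf
  rw [key]
  have hβ : Complex.betaIntegral ↑α (1 - ↑α) = ↑π / Complex.sin (↑π * ↑α) := by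
    have h₁ := Complex.Gamma_mul_Gamma_eq_betaIntegral (s := (α:ℂ)) (t := 1 - (α:ℂ))
      (by simpa using h0) (by simp [Complex.sub_re]; simpa using h1)
    rw [add_sub_cancel, Complex.Gamma_one, one_mul] at h₁
    rw [← h₁, Complex.Gamma_mul_Gamma_one_sub]
  rw [← hβ, Complex.betaIntegral, intervalIntegral.integral_of_le zero_le_one,
    integral_Ioc_eq_integral_Ioo]
  refine setIntegral_congr_fun measurableSet_Ioo ?_
  intro x hx
  have hx0 : 0 < x := hx.1
  have hx1 : 0 < 1 - x := by linarith [hx.2]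
  have e1 : ((x:ℂ)) ^ ((α:ℂ) - 1) = ((x ^ (α - 1) : ℝ) : ℂ) := by
    rw [Complex.ofReal_cpow hx0.le]; push_cast; ring_nf
  have e2 : (1 - (x:ℂ)) ^ ((1 - (α:ℂ)) - 1) = (((1 - x) ^ (-α) : ℝ) : ℂ) := by
    rw [show ((1:ℂ) - (x:ℝ)) = (((1 - x : ℝ)):ℂ) by push_cast; ring,
      Complex.ofReal_cpow hx1.le]
    push_cast; ring_nf
  dsimp only
  rw [Complex.ofReal_mul, ← e1, ← e2]

lemma aux_ball {z₀ : ℂ} (hz₀ : z₀ ∈ Complex.slitPlane) :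
    ∃ ε > (0:ℝ), ∃ c > (0:ℝ), Metric.ball z₀ ε ⊆ Complex.slitPlane ∧
      ∀ z ∈ Metric.ball z₀ ε, ∀ y : ℝ, 0 ≤ y → c * (1 + y) ≤ ‖(y:ℂ) + z‖ := by
  obtain ⟨δ, hδ, hball⟩ := Metric.isOpen_iff.mp Complex.isOpen_slitPlane z₀ hz₀
  set K : ℝ := ‖z₀‖ + δ/2 with hK
  have hK0 : 0 ≤ K := by positivity
  refine ⟨δ/2, by positivity, min (δ/(2*(2+2*K))) (1/4), by positivity,
    fun z hzb => hball (Metric.ball_subset_ball (by linarith) hzb), ?_⟩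
  intro z hzb y hy
  have hz_near : ‖z - z₀‖ < δ/2 := by
    rw [Metric.mem_ball, Complex.dist_eq] at hzb; exact hzb
  have hzn : ‖z‖ ≤ K := by
    calc ‖z‖ = ‖z₀ + (z - z₀)‖ := by ring_nf
      _ ≤ ‖z₀‖ + ‖z - z₀‖ := norm_add_le _ _
      _ ≤ K := by rw [hK]; linarith
  have hlow : δ/2 ≤ ‖(y:ℂ) + z‖ := by
    by_contra h
    push_neg at h
    have hmem : (-(y:ℝ) : ℂ) ∈ Metric.ball z₀ δ := by
      rw [Metric.mem_ball, Complex.dist_eq]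
      calc ‖(-(y:ℝ) : ℂ) - z₀‖ = ‖(-((y:ℂ) + z)) + (z - z₀)‖ := by push_cast; ring_nf
        _ ≤ ‖-((y:ℂ) + z)‖ + ‖z - z₀‖ := norm_add_le _ _
        _ = ‖(y:ℂ) + z‖ + ‖z - z₀‖ := by rw [norm_neg]
        _ < δ/2 + δ/2 := by linarith
        _ = δ := by ring
    have := hball hmem
    rw [Complex.mem_slitPlane_iff] at this
    simp only [Complex.ofReal_neg, Complex.neg_re, Complex.ofReal_re, Complex.neg_im,
      Complex.ofReal_im, neg_zero, ne_eq, not_true_eq_false, or_false] at this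
    linarith
  rcases le_or_gt y (2*K+1) with hcase | hcase
  · calc min (δ/(2*(2+2*K))) (1/4) * (1 + y) ≤ δ/(2*(2+2*K)) * (2+2*K) := by
          refine mul_le_mul (min_le_left _ _) (by linarith) (by linarith) (by positivity)
      _ = δ/2 := by field_simp
      _ ≤ ‖(y:ℂ) + z‖ := hlow
  · have hyK : y - K ≤ ‖(y:ℂ) + z‖ := by
      calc y - K ≤ y - ‖z‖ := by linarith
        _ = ‖(y:ℂ)‖ - ‖-z‖ := by
            rw [norm_neg, Complex.norm_real, Real.norm_eq_abs, abs_of_nonneg hy]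
        _ ≤ ‖(y:ℂ) - (-z)‖ := norm_sub_norm_le _ _
        _ = ‖(y:ℂ) + z‖ := by rw [sub_neg_eq_add]
    calc min (δ/(2*(2+2*K))) (1/4) * (1 + y) ≤ (1/4) * (1+y) := by
          refine mul_le_mul_of_nonneg_right (min_le_right _ _) (by linarith)
      _ ≤ y - K := by rw [hK]; rw [hK] at hcase; linarith [norm_nonneg z₀]
      _ ≤ ‖(y:ℂ) + z‖ := hyK

lemma aux_mem_slit {z : ℂ} (hz : z ∈ Complex.slitPlane) {y : ℝ} (hy : 0 < y) :
    (y:ℂ) + z ∈ Complex.slitPlane := by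
  rw [Complex.mem_slitPlane_iff] at hz ⊢
  rcases hz with h | h
  · exact Or.inl (by simp only [Complex.add_re, Complex.ofReal_re]; linarith)
  · exact Or.inr (by simpa using h)

lemma aux_cont {α : ℝ} {z : ℂ} (hz : z ∈ Complex.slitPlane) (n : ℕ) :
    ContinuousOn (fun y : ℝ => (y:ℂ) ^ ((α:ℂ) - 1) / ((y:ℂ) + z) ^ n) (Set.Ioi 0) := by
  intro y hy
  have hy0 : (0:ℝ) < y := hy
  have hnum : ContinuousWithinAt (fun y : ℝ => (y:ℂ) ^ ((α:ℂ) - 1)) (Set.Ioi 0) y := by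
    refine ContinuousAt.continuousWithinAt ?_
    exact (continuousAt_cpow_const (Complex.mem_slitPlane_iff.mpr (Or.inl (by simpa using hy0)))).comp
      Complex.continuous_ofReal.continuousAt
  have hden : ContinuousWithinAt (fun y : ℝ => ((y:ℂ) + z) ^ n) (Set.Ioi 0) y :=
    ((Complex.continuous_ofReal.add continuous_const).pow n).continuousWithinAt
  refine hnum.div hden ?_
  exact pow_ne_zero _ (Complex.slitPlane_ne_zero (aux_mem_slit hz hy0))

lemma aux_norm_cpow {α : ℝ} {y : ℝ} (hy : 0 < y) :
    ‖(y:ℂ) ^ ((α:ℂ) - 1)‖ = y ^ (α - 1) := by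
  rw [Complex.norm_cpow_eq_rpow_re_of_pos hy]
  norm_num

lemma aux_integrable {α : ℝ} (hα : α ∈ Set.Ioo (0:ℝ) 1) {z : ℂ}
    (hz : z ∈ Complex.slitPlane) :
    IntegrableOn (fun y : ℝ => (y:ℂ) ^ ((α:ℂ) - 1) / ((y:ℂ) + z)) (Set.Ioi 0) := by
  obtain ⟨ε, hε, c, hc, hsub, hbd⟩ := aux_ball hz
  have hzb : z ∈ Metric.ball z ε := Metric.mem_ball_self hε
  have hint : IntegrableOn (fun y : ℝ => c⁻¹ * (y ^ (α-1) * (1+y) ^ (-1:ℝ))) (Set.Ioi 0) :=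
    (aux_integrable_bound hα.1 (by linarith [hα.2])).const_mul _
  have hc1 := aux_cont (α := α) (z := z) hz 1
  simp only [pow_one] at hc1
  refine hint.mono' (hc1.aestronglyMeasurable measurableSet_Ioi) ?_
  filter_upwards [ae_restrict_mem measurableSet_Ioi] with y hy
  have hy0 : (0:ℝ) < y := hy
  have hden : c * (1 + y) ≤ ‖(y:ℂ) + z‖ := hbd z hzb y hy0.le
  have hcpos : 0 < c * (1 + y) := by positivity
  calc ‖(y:ℂ) ^ ((α:ℂ) - 1) / ((y:ℂ) + z)‖
      = y ^ (α - 1) / ‖(y:ℂ) + z‖ := by rw [norm_div, aux_norm_cpow hy0]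
    _ ≤ y ^ (α - 1) / (c * (1 + y)) := by
        apply div_le_div_of_nonneg_left (Real.rpow_nonneg hy0.le _) hcpos hden
    _ = c⁻¹ * (y ^ (α-1) * (1+y) ^ (-1:ℝ)) := by
        rw [Real.rpow_neg_one, div_eq_mul_inv, mul_inv]
        ring

lemma aux_diff {α : ℝ} (hα : α ∈ Set.Ioo (0:ℝ) 1) :
    DifferentiableOn ℂ
      (fun z : ℂ => ∫ y in Set.Ioi (0:ℝ), (y:ℂ) ^ ((α:ℂ) - 1) / ((y:ℂ) + z))
      Complex.slitPlane := by
  intro z₀ hz₀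
  obtain ⟨ε, hε, c, hc, hsub, hbd⟩ := aux_ball hz₀
  have key := hasDerivAt_integral_of_dominated_loc_of_deriv_le (μ := volume.restrict (Set.Ioi 0))
    (F := fun (z : ℂ) (y : ℝ) => (y:ℂ) ^ ((α:ℂ) - 1) / ((y:ℂ) + z))
    (F' := fun (z : ℂ) (y : ℝ) => -((y:ℂ) ^ ((α:ℂ) - 1) / ((y:ℂ) + z) ^ 2))
    (x₀ := z₀) (bound := fun y : ℝ => (c^2)⁻¹ * (y ^ (α-1) * (1+y) ^ (-2:ℝ))) (Metric.ball_mem_nhds z₀ hε)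
    ?_ ?_ ?_ ?_ ?_ ?_
  · exact (key.2.differentiableAt).differentiableWithinAt
  · filter_upwards [Metric.ball_mem_nhds z₀ hε] with z hzb
    have hc1 := aux_cont (α := α) (z := z) (hsub hzb) 1
    simp only [pow_one] at hc1
    exact hc1.aestronglyMeasurable measurableSet_Ioi
  · exact aux_integrable hα hz₀
  · have hc2 := aux_cont (α := α) (z := z₀) hz₀ 2
    exact (hc2.aestronglyMeasurable measurableSet_Ioi).neg
  · rw [ae_restrict_iff' measurableSet_Ioi]
    refine Filter.Eventually.of_forall ?_
    intro y hy z hzb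
    have hy0 : (0:ℝ) < y := hy
    have hden : c * (1 + y) ≤ ‖(y:ℂ) + z‖ := hbd z hzb y hy0.le
    have hcpos : 0 < c * (1 + y) := by positivity
    calc ‖-((y:ℂ) ^ ((α:ℂ) - 1) / ((y:ℂ) + z) ^ 2)‖
        = y ^ (α - 1) / ‖(y:ℂ) + z‖ ^ 2 := by
          rw [norm_neg, norm_div, aux_norm_cpow hy0, norm_pow]
      _ ≤ y ^ (α - 1) / (c * (1 + y)) ^ 2 := by
          apply div_le_div_of_nonneg_left (Real.rpow_nonneg hy0.le _) (by positivity)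
          exact pow_le_pow_left₀ hcpos.le hden 2
      _ = (c^2)⁻¹ * (y ^ (α-1) * (1+y) ^ (-2:ℝ)) := by
          rw [show (-2:ℝ) = -(2:ℕ) by norm_num, Real.rpow_neg (by linarith : (0:ℝ) ≤ 1+y),
            Real.rpow_natCast]
          rw [mul_pow, div_eq_mul_inv, mul_inv]
          ring
  · exact ((aux_integrable_bound hα.1 (by linarith [hα.2] : α < 2)).const_mul _)
  · rw [ae_restrict_iff' measurableSet_Ioi]
    refine Filter.Eventually.of_forall ?_
    intro y hy z hzb
    have hy0 : (0:ℝ) < y := hy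
    have hne : (y:ℂ) + z ≠ 0 := Complex.slitPlane_ne_zero (aux_mem_slit (hsub hzb) hy0)
    have h1 : HasDerivAt (fun z : ℂ => (y:ℂ) + z) 1 z := (hasDerivAt_id z).const_add _
    have h2 := (h1.inv hne).const_mul ((y:ℂ) ^ ((α:ℂ) - 1))
    have heq : ∀ w : ℂ, (y:ℂ) ^ ((α:ℂ) - 1) * ((y:ℂ) + w)⁻¹
        = (y:ℂ) ^ ((α:ℂ) - 1) / ((y:ℂ) + w) := fun w => (div_eq_mul_inv _ _).symm
    simp only [Pi.inv_apply, heq] at h2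
    refine h2.congr_deriv ?_
    ring

lemma aux_scale {α : ℝ} {x : ℝ} (hx : 0 < x) :
    ∫ y in Set.Ioi (0:ℝ), (y:ℂ) ^ ((α:ℂ) - 1) / ((y:ℂ) + (x:ℂ)) =
      ((x ^ (α-1) : ℝ) : ℂ) * ∫ u in Set.Ioi (0:ℝ), (u:ℂ) ^ ((α:ℂ) - 1) / (1 + (u:ℂ)) := by
  have hcomp := integral_comp_mul_left_Ioi
    (fun y : ℝ => (y:ℂ) ^ ((α:ℂ) - 1) / ((y:ℂ) + (x:ℂ))) 0 hx
  rw [mul_zero] at hcomp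
  have hxC : (x:ℂ) ≠ 0 := Complex.ofReal_ne_zero.mpr hx.ne'
  have hcongr : (∫ u in Set.Ioi (0:ℝ),
        (fun y : ℝ => (y:ℂ) ^ ((α:ℂ) - 1) / ((y:ℂ) + (x:ℂ))) (x * u))
      = (((x ^ (α-1) : ℝ) : ℂ) * ((x:ℂ))⁻¹) *
          ∫ u in Set.Ioi (0:ℝ), (u:ℂ) ^ ((α:ℂ) - 1) / (1 + (u:ℂ)) := by
    rw [← integral_const_mul]
    refine setIntegral_congr_fun measurableSet_Ioi ?_
    intro u hu
    dsimp only
    have hu0 : (0:ℝ) < u := hu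
    have e1 : ((x*u : ℝ):ℂ) ^ ((α:ℂ) - 1)
        = ((x ^ (α-1) : ℝ) : ℂ) * ((u ^ (α-1) : ℝ) : ℂ) := by
      rw [show ((α:ℂ) - 1) = ((α - 1 : ℝ) : ℂ) by push_cast; ring,
        ← Complex.ofReal_cpow (by positivity) , ← Complex.ofReal_mul]
      rw [Real.mul_rpow hx.le hu0.le]
    have e2 : ((x*u : ℝ):ℂ) + (x:ℂ) = (x:ℂ) * (1 + (u:ℂ)) := by push_cast; ring
    have e3 : ((u:ℝ):ℂ) ^ ((α:ℂ) - 1) = ((u ^ (α-1) : ℝ) : ℂ) := by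
      rw [show ((α:ℂ) - 1) = ((α - 1 : ℝ) : ℂ) by push_cast; ring,
        ← Complex.ofReal_cpow hu0.le]
    have h1u : (1:ℂ) + (u:ℂ) ≠ 0 := by
      intro h
      have : ((1 + u : ℝ):ℂ) = 0 := by push_cast; linear_combination h
      rw [Complex.ofReal_eq_zero] at this
      linarith
    rw [e1, e2, e3]
    field_simp
  calc ∫ y in Set.Ioi (0:ℝ), (y:ℂ) ^ ((α:ℂ) - 1) / ((y:ℂ) + (x:ℂ))
      = x • (x⁻¹ • ∫ y in Set.Ioi (0:ℝ), (y:ℂ) ^ ((α:ℂ) - 1) / ((y:ℂ) + (x:ℂ))) := by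
        rw [smul_smul, mul_inv_cancel₀ hx.ne', one_smul]
    _ = x • ∫ u in Set.Ioi (0:ℝ),
          (fun y : ℝ => (y:ℂ) ^ ((α:ℂ) - 1) / ((y:ℂ) + (x:ℂ))) (x * u) := by rw [hcomp]
    _ = ((x ^ (α-1) : ℝ) : ℂ) * ∫ u in Set.Ioi (0:ℝ), (u:ℂ) ^ ((α:ℂ) - 1) / (1 + (u:ℂ)) := by
        rw [hcongr, Complex.real_smul, ← mul_assoc]
        congr 1
        field_simp

lemma aux_eqOn {α : ℝ} (hα : α ∈ Set.Ioo (0:ℝ) 1) :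
    Set.EqOn (fun z : ℂ => ∫ y in Set.Ioi (0:ℝ), (y:ℂ) ^ ((α:ℂ) - 1) / ((y:ℂ) + z))
      (fun z : ℂ => (↑Real.pi / Complex.sin (↑Real.pi * ↑α)) * z ^ ((α:ℂ) - 1))
      Complex.slitPlane := by
  have hF : AnalyticOnNhd ℂ
      (fun z : ℂ => ∫ y in Set.Ioi (0:ℝ), (y:ℂ) ^ ((α:ℂ) - 1) / ((y:ℂ) + z))
      Complex.slitPlane := (aux_diff hα).analyticOnNhd Complex.isOpen_slitPlane
  have hG : AnalyticOnNhd ℂ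
      (fun z : ℂ => (↑Real.pi / Complex.sin (↑Real.pi * ↑α)) * z ^ ((α:ℂ) - 1))
      Complex.slitPlane := by
    refine DifferentiableOn.analyticOnNhd ?_ Complex.isOpen_slitPlane
    intro z hzs
    exact (((differentiableAt_id.cpow (differentiableAt_const _) hzs)).const_mul
      _).differentiableWithinAt
  have hpre : IsPreconnected Complex.slitPlane := by
    have hcontr : ContractibleSpace Complex.slitPlane :=
      StarConvex.contractibleSpace Complex.starConvex_one_slitPlane ⟨1, Complex.one_mem_slitPlane⟩
    rw [isPreconnected_iff_preconnectedSpace]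
    infer_instance
  have hFG : ∀ x : ℝ, 0 < x →
      (∫ y in Set.Ioi (0:ℝ), (y:ℂ) ^ ((α:ℂ) - 1) / ((y:ℂ) + (x:ℂ)))
        = (↑Real.pi / Complex.sin (↑Real.pi * ↑α)) * (x:ℂ) ^ ((α:ℂ) - 1) := by
    intro x hx
    rw [aux_scale hx, aux_beta hα.1 hα.2,
      show ((α:ℂ) - 1) = ((α - 1 : ℝ) : ℂ) by push_cast; ring,
      ← Complex.ofReal_cpow hx.le]
    ring
  refine hF.eqOn_of_preconnected_of_frequently_eq hG hpre Complex.one_mem_slitPlane ?_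
  have hseq : Filter.Tendsto (fun n : ℕ => ((1 + 1/(n+1) : ℝ) : ℂ)) Filter.atTop
      (nhdsWithin 1 {(1:ℂ)}ᶜ) := by
    rw [tendsto_nhdsWithin_iff]
    constructor
    · have : Filter.Tendsto (fun n : ℕ => (1 + 1/(n+1) : ℝ)) Filter.atTop (nhds 1) := by
        have h0 := tendsto_one_div_add_atTop_nhds_zero_nat (𝕜 := ℝ)
        have := (tendsto_const_nhds (x := (1:ℝ)) (f := Filter.atTop (α := ℕ))).add h0
        simpa using this
      have h2 : Filter.Tendsto (fun n : ℕ => ((1 + 1/(n+1) : ℝ) : ℂ)) Filter.atTop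
          (nhds ((1:ℝ):ℂ)) := (Complex.continuous_ofReal.tendsto 1).comp this
      simpa using h2
    · refine Filter.Eventually.of_forall fun n => ?_
      simp only [Set.mem_compl_iff, Set.mem_singleton_iff]
      intro h
      have : (1 + 1/(n+1) : ℝ) = 1 := by exact_mod_cast h
      have hpos : (0:ℝ) < 1/(n+1) := by positivity
      linarith
  refine hseq.frequently (Filter.Eventually.frequently (Filter.Eventually.of_forall fun n => ?_))
  exact hFG _ (by positivity)

/-- For all complex `z` not on the negative real axis and `α ∈ (0,1)`,
`z^α = (sin(απ)/π) ∫₀^∞ z y^(α−1)/(y+z) dy` (principal branch). -/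
theorem stmt0 (α : ℝ) (hα : α ∈ Set.Ioo (0:ℝ) 1) (z : ℂ)
    (hz : ∀ x : ℝ, x < 0 → z ≠ (x : ℂ)) :
    z ^ (α : ℂ) =
      ((Real.sin (α * Real.pi) / Real.pi : ℝ) : ℂ) *
        ∫ y in Set.Ioi (0:ℝ), z * (y : ℂ) ^ ((α : ℂ) - 1) / ((y : ℂ) + z) := by
  by_cases hz0 : z = 0
  · subst hz0
    rw [Complex.zero_cpow (by exact_mod_cast hα.1.ne' : (α:ℂ) ≠ 0)]
    simp
  · have hzslit : z ∈ Complex.slitPlane := by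
      rw [Complex.mem_slitPlane_iff]
      by_contra h
      push_neg at h
      obtain ⟨hre, him⟩ := h
      have hzx : z = ((z.re : ℝ) : ℂ) := Complex.ext rfl (by simpa using him)
      rcases lt_or_eq_of_le hre with h' | h'
      · exact hz z.re h' hzx
      · apply hz0
        rw [hzx, h']
        simp
    have hkey := aux_eqOn hα hzslit
    simp only at hkey
    have hint : ∫ y in Set.Ioi (0:ℝ), z * (y : ℂ) ^ ((α : ℂ) - 1) / ((y : ℂ) + z)
        = z * ((↑Real.pi / Complex.sin (↑Real.pi * ↑α)) * z ^ ((α:ℂ) - 1)) := by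
      rw [← hkey, ← integral_const_mul]
      refine setIntegral_congr_fun measurableSet_Ioi fun y hy => ?_
      rw [mul_div_assoc]
    rw [hint]
    have hsin : Complex.sin (↑Real.pi * ↑α) ≠ 0 := by
      rw [show ((Real.pi : ℂ) * ↑α) = ((Real.pi * α : ℝ) : ℂ) by push_cast; ring,
        ← Complex.ofReal_sin, Complex.ofReal_ne_zero]
      refine (Real.sin_pos_of_pos_of_lt_pi ?_ ?_).ne'
      · exact mul_pos Real.pi_pos hα.1
      · nlinarith [Real.pi_pos, hα.2]
    have hpi : (Real.pi : ℂ) ≠ 0 := Complex.ofReal_ne_zero.mpr Real.pi_ne_zero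
    have hzpow : z ^ (α : ℂ) = z * z ^ ((α:ℂ) - 1) := by
      rw [show (α:ℂ) = 1 + ((α:ℂ) - 1) by ring, Complex.cpow_add _ _ hz0, Complex.cpow_one]
      ring_nf
    rw [hzpow]
    rw [Complex.ofReal_div, Complex.ofReal_sin,
      show ((α * Real.pi : ℝ) : ℂ) = ↑Real.pi * ↑α by push_cast; ring]
    field_simp
    rw [mul_div_assoc, div_self (by rwa [mul_comm] : Complex.sin (↑α * ↑Real.pi) ≠ 0), mul_one]
end

section
/- For α ∈ (0,1) and z ∈ ℂ \ (−∞,0), the function y ↦ y^{α−1}/(y+z) satisfies ∫₀^∞ y^{α−1}/(y+z) dy = π z^{α−1}/sin(απ), using the principal branch of z^{α−1}. -/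
open MeasureTheory Set Complex Real Filter

lemma cpow_ofReal_eq (α : ℝ) {y : ℝ} (hy : 0 ≤ y) :
    (y:ℂ) ^ ((α:ℂ) - 1) = ((y ^ (α-1) : ℝ) : ℂ) := by
  have := Complex.ofReal_cpow hy (α-1)
  rw [Complex.ofReal_sub, Complex.ofReal_one] at this
  exact this.symm

lemma intA (α : ℝ) (h0 : 0 < α) (h1 : α < 1) :
    IntegrableOn (fun y : ℝ => y ^ (α-1) * (1+y)⁻¹) (Ioi 0) := by
  have hu : Ioc (0:ℝ) 1 ∪ Ioi 1 = Ioi 0 := Set.Ioc_union_Ioi_eq_Ioi zero_le_one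
  rw [← hu]
  apply IntegrableOn.union
  · have hbase : IntegrableOn (fun y : ℝ => y ^ (α-1)) (Ioc 0 1) := by
      have := intervalIntegral.intervalIntegrable_rpow' (a := 0) (b := 1)
        (r := α - 1) (by linarith)
      rwa [intervalIntegrable_iff_integrableOn_Ioc_of_le zero_le_one] at this
    apply hbase.mono' ?_ ?_
    · apply ContinuousOn.aestronglyMeasurable ?_ measurableSet_Ioc
      apply ContinuousOn.mul
      · exact fun x hx => (Real.continuousAt_rpow_const x _ (Or.inl (ne_of_gt hx.1))).continuousWithinAt
      · exact ContinuousOn.inv₀ (by fun_prop) (fun x hx => by nlinarith [hx.1])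
    · filter_upwards [self_mem_ae_restrict measurableSet_Ioc] with y hy
      have hy0 : (0:ℝ) < y := hy.1
      have h1y : (1:ℝ) ≤ 1 + y := by linarith
      rw [Real.norm_eq_abs, _root_.abs_of_nonneg (by positivity : (0:ℝ) ≤ y ^ (α-1) * (1+y)⁻¹)]
      calc y ^ (α-1) * (1+y)⁻¹ ≤ y ^ (α-1) * 1 :=
              mul_le_mul_of_nonneg_left (by rw [inv_le_one_iff₀]; right; exact h1y)
                (by positivity)
        _ = y ^ (α-1) := mul_one _
  · have hbase : IntegrableOn (fun y : ℝ => y ^ (α-2)) (Ioi 1) :=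
      integrableOn_Ioi_rpow_of_lt (by linarith) one_pos
    apply hbase.mono' ?_ ?_
    · apply ContinuousOn.aestronglyMeasurable ?_ measurableSet_Ioi
      apply ContinuousOn.mul
      · intro x hx
        simp only [mem_Ioi] at hx
        exact (Real.continuousAt_rpow_const x _ (Or.inl (by linarith))).continuousWithinAt
      · exact ContinuousOn.inv₀ (by fun_prop) (fun x hx => by simp only [mem_Ioi] at hx; nlinarith)
    · filter_upwards [self_mem_ae_restrict measurableSet_Ioi] with y hy
      simp only [mem_Ioi] at hy
      have hy0 : (0:ℝ) < y := by linarith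
      rw [Real.norm_eq_abs, _root_.abs_of_nonneg (by positivity : (0:ℝ) ≤ y ^ (α-1) * (1+y)⁻¹)]
      have : (1+y)⁻¹ ≤ y⁻¹ := by
        apply inv_anti₀ hy0; linarith
      calc y ^ (α-1) * (1+y)⁻¹ ≤ y ^ (α-1) * y⁻¹ := by gcongr
        _ = y ^ (α-2) := by
            rw [← Real.rpow_neg_one y, ← Real.rpow_add hy0]; ring_nf


lemma add_slit (z : ℂ) (hz : z ∈ Complex.slitPlane) {y : ℝ} (hy : 0 ≤ y) :
    (y:ℂ) + z ∈ Complex.slitPlane := by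
  rw [Complex.mem_slitPlane_iff] at hz ⊢
  rcases hz with h | h
  · left; simp only [Complex.add_re, Complex.ofReal_re]; linarith
  · right; simpa using h

lemma lowerBound (z₀ : ℂ) (hz₀ : z₀ ∈ Complex.slitPlane) :
    ∃ ε > 0, Metric.closedBall z₀ ε ⊆ Complex.slitPlane ∧ ∃ c > 0,
      ∀ z ∈ Metric.closedBall z₀ ε, ∀ y : ℝ, 0 ≤ y →
      c * (1+y) ≤ ‖(y:ℂ) + z‖ := by
  obtain ⟨ε, hε, hball⟩ := Metric.isOpen_iff.mp Complex.isOpen_slitPlane z₀ hz₀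
  obtain ⟨M, hM⟩ : ∃ M : ℝ, M = ‖z₀‖ + ε/2 := ⟨_, rfl⟩
  have hM0 : 0 ≤ M := by rw [hM]; positivity
  refine ⟨ε/2, by positivity, ?_, min (1/2) ((ε/2)/(2*(M+1))), ?_, ?_⟩
  · refine subset_trans ?_ hball
    exact Metric.closedBall_subset_ball (by linarith)
  · have : 0 < M + 1 := by linarith
    positivity
  intro z hzB y hy
  have hzM : ‖z‖ ≤ M := by
    calc ‖z‖ = ‖z‖ := rfl
      _ ≤ ‖z₀‖ + ‖z - z₀‖ := by
          have := norm_add_le (z - z₀) z₀; simpa [add_comm] using this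
      _ ≤ M := by
          have h5 : ‖z - z₀‖ ≤ ε/2 := by
            rw [← dist_eq_norm]; exact Metric.mem_closedBall.mp hzB
          have h6 : ‖z₀‖ = ‖z₀‖ := rfl
          rw [hM, h6]; linarith
  -- two lower bounds on |y+z|
  have hb1 : ε/2 ≤ ‖(y:ℂ) + z‖ := by
    have hne : (-(y:ℂ)) ∉ Metric.ball z₀ ε := by
      intro hmem
      have : (-(y:ℝ) : ℂ) ∈ Complex.slitPlane := hball (by push_cast; exact hmem)
      rw [Complex.neg_ofReal_mem_slitPlane] at this
      linarith
    have h1 : ε ≤ dist (-(y:ℂ)) z₀ := le_of_not_gt (fun h => hne (Metric.mem_ball.mpr h))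
    have h2 : dist z z₀ ≤ ε/2 := Metric.mem_closedBall.mp hzB
    have h3 : dist (-(y:ℂ)) z₀ ≤ dist (-(y:ℂ)) z + dist z z₀ := dist_triangle _ _ _
    have h4 : dist (-(y:ℂ)) z = ‖(y:ℂ) + z‖ := by
      rw [dist_eq_norm]
      rw [show -(y:ℂ) - z = -((y:ℂ)+z) by ring, norm_neg]
    linarith
  have hb2 : y - M ≤ ‖(y:ℂ) + z‖ := by
    have := norm_sub_norm_le ((y:ℂ)) (-z)
    simp only [sub_neg_eq_add, norm_neg] at this
    have hay : ‖(y:ℂ)‖ = y := by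
      rw [Complex.norm_real, Real.norm_eq_abs, _root_.abs_of_nonneg hy]
    rw [hay] at this
    linarith
  rcases le_or_gt y (2*M+1) with hcase | hcase
  · calc min (1/2) ((ε/2)/(2*(M+1))) * (1+y) ≤ ((ε/2)/(2*(M+1))) * (2*(M+1)) := by
          apply mul_le_mul (min_le_right _ _) (by linarith) (by linarith) (by positivity)
      _ = ε/2 := by
          have : (2:ℝ)*(M+1) ≠ 0 := by positivity
          field_simp
      _ ≤ _ := hb1
  · calc min (1/2) ((ε/2)/(2*(M+1))) * (1+y) ≤ (1/2) * (1+y) := by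
          apply mul_le_mul_of_nonneg_right (min_le_left _ _) (by linarith)
      _ ≤ y - M := by nlinarith
      _ ≤ _ := hb2

lemma normNum (α : ℝ) {y : ℝ} (hy : 0 ≤ y) :
    ‖(y:ℂ) ^ ((α:ℂ) - 1)‖ = y ^ (α-1) := by
  have h := Complex.ofReal_cpow hy (α-1)
  rw [Complex.ofReal_sub, Complex.ofReal_one] at h
  rw [← h, Complex.norm_real, Real.norm_eq_abs, _root_.abs_of_nonneg (Real.rpow_nonneg hy _)]

lemma contOn (α : ℝ) (z : ℂ) (hz : z ∈ Complex.slitPlane) :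
    ContinuousOn (fun y : ℝ => (y:ℂ) ^ ((α:ℂ)-1) / ((y:ℂ) + z)) (Ioi 0) := by
  apply ContinuousOn.div
  · apply ContinuousOn.congr (f := fun y : ℝ => ((y ^ (α-1) : ℝ) : ℂ))
    · exact Complex.continuous_ofReal.comp_continuousOn
        (fun x hx => (Real.continuousAt_rpow_const x _ (Or.inl (ne_of_gt hx))).continuousWithinAt)
    · intro y hy
      have h := Complex.ofReal_cpow (le_of_lt hy) (α-1)
      rw [Complex.ofReal_sub, Complex.ofReal_one] at h
      exact h.symm
  · fun_prop
  · intro y hy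
    exact Complex.slitPlane_ne_zero (add_slit z hz (le_of_lt hy))

lemma intMain (α : ℝ) (h0 : 0 < α) (h1 : α < 1) (z : ℂ) (hz : z ∈ Complex.slitPlane) :
    IntegrableOn (fun y : ℝ => (y:ℂ) ^ ((α:ℂ)-1) / ((y:ℂ) + z)) (Ioi 0) := by
  obtain ⟨ε, hε, hsub, c, hc, hbd⟩ := lowerBound z hz
  have hzB : z ∈ Metric.closedBall z ε := Metric.mem_closedBall_self (le_of_lt hε)
  apply Integrable.mono' ((intA α h0 h1).const_mul c⁻¹)
    ((contOn α z hz).aestronglyMeasurable measurableSet_Ioi)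
  filter_upwards [self_mem_ae_restrict measurableSet_Ioi] with y hy
  simp only [mem_Ioi] at hy
  rw [norm_div, normNum α (le_of_lt hy)]
  have hcy : 0 < c * (1+y) := by positivity
  calc y ^ (α-1) / ‖(y:ℂ)+z‖ ≤ y ^ (α-1) / (c*(1+y)) :=
        div_le_div_of_nonneg_left (Real.rpow_nonneg (le_of_lt hy) _) hcy
          (hbd z hzB y (le_of_lt hy))
    _ = c⁻¹ * (y ^ (α-1) * (1+y)⁻¹) := by
        field_simp

lemma diffF (α : ℝ) (h0 : 0 < α) (h1 : α < 1) :
    DifferentiableOn ℂ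
      (fun z => ∫ y in Ioi (0:ℝ), (y:ℂ) ^ ((α:ℂ)-1) / ((y:ℂ) + z))
      Complex.slitPlane := by
  intro z₀ hz₀
  obtain ⟨ε, hε, hsub, c, hc, hbd⟩ := lowerBound z₀ hz₀
  have hball : Metric.ball z₀ ε ⊆ Complex.slitPlane :=
    subset_trans Metric.ball_subset_closedBall hsub
  have key := hasDerivAt_integral_of_dominated_loc_of_deriv_le (μ := volume.restrict (Ioi 0))
    (F := fun (x : ℂ) (y : ℝ) => (y:ℂ) ^ ((α:ℂ)-1) / ((y:ℂ) + x))
    (F' := fun (x : ℂ) (y : ℝ) => -((y:ℂ) ^ ((α:ℂ)-1)) / ((y:ℂ) + x)^2)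
    (x₀ := z₀) (bound := fun y => c⁻¹ * c⁻¹ * (y ^ (α-1) * (1+y)⁻¹)) (Metric.ball_mem_nhds z₀ hε)
    ?_ ?_ ?_ ?_ ?_ ?_
  · exact (key.2.differentiableAt).differentiableWithinAt
  · filter_upwards [Complex.isOpen_slitPlane.mem_nhds hz₀] with x hx
    exact (contOn α x hx).aestronglyMeasurable measurableSet_Ioi
  · exact intMain α h0 h1 z₀ hz₀
  · -- measurability of F' z₀
    apply ContinuousOn.aestronglyMeasurable ?_ measurableSet_Ioi
    apply ContinuousOn.div
    · apply ContinuousOn.neg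
      apply ContinuousOn.congr (f := fun y : ℝ => ((y ^ (α-1) : ℝ) : ℂ))
      · exact Complex.continuous_ofReal.comp_continuousOn
          (fun x hx => (Real.continuousAt_rpow_const x _
            (Or.inl (ne_of_gt hx))).continuousWithinAt)
      · intro y hy
        have h := Complex.ofReal_cpow (le_of_lt hy) (α-1)
        rw [Complex.ofReal_sub, Complex.ofReal_one] at h
        exact h.symm
    · fun_prop
    · intro y hy
      exact pow_ne_zero _ (Complex.slitPlane_ne_zero
        (add_slit z₀ hz₀ (le_of_lt hy)))
  · -- bound
    filter_upwards [self_mem_ae_restrict measurableSet_Ioi] with y hy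
    intro x hx
    simp only [mem_Ioi] at hy
    have hxB : x ∈ Metric.closedBall z₀ ε := Metric.ball_subset_closedBall hx
    have hb := hbd x hxB y (le_of_lt hy)
    have hcy : 0 < c * (1+y) := by positivity
    rw [norm_div, norm_neg, normNum α (le_of_lt hy)]
    have habs : ‖(y:ℂ)+x‖ = ‖(y:ℂ)+x‖ := rfl
    calc y ^ (α-1) / ‖((y:ℂ)+x)^2‖
        ≤ y ^ (α-1) / (c*(1+y))^2 := by
          apply div_le_div_of_nonneg_left (Real.rpow_nonneg (le_of_lt hy) _) (by positivity)
          rw [norm_pow, ← habs]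
          exact pow_le_pow_left₀ (le_of_lt hcy) hb 2
      _ ≤ c⁻¹ * c⁻¹ * (y ^ (α-1) * (1+y)⁻¹) := by
          rw [div_eq_mul_inv, mul_pow, mul_inv]
          have h1y : (0:ℝ) < 1 + y := by linarith
          have : ((1+y)^2)⁻¹ ≤ (1+y)⁻¹ := by
            apply inv_anti₀ h1y
            nlinarith
          calc y ^ (α-1) * ((c^2)⁻¹ * ((1+y)^2)⁻¹)
              ≤ y ^ (α-1) * ((c^2)⁻¹ * (1+y)⁻¹) := by
                apply mul_le_mul_of_nonneg_left ?_ (Real.rpow_nonneg (le_of_lt hy) _)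
                apply mul_le_mul_of_nonneg_left this (by positivity)
            _ = c⁻¹ * c⁻¹ * (y ^ (α-1) * (1+y)⁻¹) := by
                rw [sq, mul_inv]; ring
  · exact ((intA α h0 h1).const_mul _)
  · -- differentiability
    filter_upwards [self_mem_ae_restrict measurableSet_Ioi] with y hy
    intro x hx
    simp only [mem_Ioi] at hy
    have hne : (y:ℂ) + x ≠ 0 :=
      Complex.slitPlane_ne_zero (add_slit x (hball hx) (le_of_lt hy))
    have hD : HasDerivAt (fun w : ℂ => (y:ℂ) + w) 1 x := by
      simpa using (hasDerivAt_id x).const_add (y:ℂ)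
    have := (hasDerivAt_const x ((y:ℂ) ^ ((α:ℂ)-1))).div hD hne
    exact this.congr_deriv (by ring)


lemma cpow_ofReal_eq' (α : ℝ) {y : ℝ} (hy : 0 ≤ y) :
    (y:ℂ) ^ ((α:ℂ) - 1) = ((y ^ (α-1) : ℝ) : ℂ) := by
  have := Complex.ofReal_cpow hy (α-1)
  rw [Complex.ofReal_sub, Complex.ofReal_one] at this
  exact this.symm

lemma betaI (α : ℝ) (h0 : 0 < α) (h1 : α < 1) :
    ∫ t in Ioi (0:ℝ), (t:ℂ) ^ ((α:ℂ)-1) / ((t:ℂ) + 1)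
      = (Real.pi : ℂ) / ((Real.sin (Real.pi * α) : ℝ) : ℂ) := by
  -- change of variables x ↦ x/(1-x) from Ioo 0 1 to Ioi 0
  have h_img : (fun x : ℝ => x / (1-x)) '' Ioo 0 1 = Ioi 0 := by
    ext t
    constructor
    · rintro ⟨x, hx, rfl⟩
      exact div_pos hx.1 (by linarith [hx.2])
    · intro ht
      simp only [mem_Ioi] at ht
      refine ⟨t / (1+t), ⟨div_pos ht (by linarith), ?_⟩, ?_⟩
      · rw [div_lt_one (by linarith)]; linarith
      · have h1t : (1:ℝ) + t ≠ 0 := by positivity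
        field_simp
        ring
  have h_inj : InjOn (fun x : ℝ => x / (1-x)) (Ioo 0 1) := by
    intro a ha b hb hab
    simp only at hab
    have ha1 : (1:ℝ) - a ≠ 0 := by have := ha.2; intro h; nlinarith [ha.1]
    have hb1 : (1:ℝ) - b ≠ 0 := by have := hb.2; intro h; nlinarith [hb.1]
    field_simp at hab
    nlinarith [hab]
  have h_der : ∀ x ∈ Ioo (0:ℝ) 1,
      HasDerivWithinAt (fun x : ℝ => x / (1-x)) (((1-x)^2)⁻¹) (Ioo 0 1) x := by
    intro x hx
    have hx1 : (1:ℝ) - x ≠ 0 := by have := hx.2; intro h; nlinarith [hx.1]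
    have := (hasDerivAt_id x).div ((hasDerivAt_id x).const_sub 1) hx1
    simp only [one_mul, id_eq] at this
    exact this.hasDerivWithinAt.congr_deriv (by ring)
  have hcv := integral_image_eq_integral_abs_deriv_smul measurableSet_Ioo h_der h_inj
    (fun t : ℝ => (t:ℂ) ^ ((α:ℂ)-1) / ((t:ℂ) + 1))
  rw [h_img] at hcv
  rw [hcv]
  -- pointwise identification with the Beta integrand
  have hpt : ∀ x ∈ Ioo (0:ℝ) 1,
      |((1-x)^2)⁻¹| • ((((x/(1-x):ℝ)):ℂ) ^ ((α:ℂ)-1) / (((x/(1-x):ℝ):ℂ) + 1))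
        = ((x ^ (α-1) * (1-x) ^ (-α) : ℝ) : ℂ) := by
    intro x hx
    have hx0 : 0 < x := hx.1
    have hx1 : 0 < 1 - x := by linarith [hx.2]
    have ht0 : 0 ≤ x / (1-x) := le_of_lt (div_pos hx0 hx1)
    rw [cpow_ofReal_eq' α ht0]
    have hden : ((x/(1-x):ℝ):ℂ) + 1 = (((1-x)⁻¹ : ℝ) : ℂ) := by
      rw [show ((x/(1-x):ℝ):ℂ) + 1 = ((x/(1-x) + 1 : ℝ):ℂ) by push_cast; ring]
      congr 1
      field_simp
      ring
    rw [hden, ← Complex.ofReal_div]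
    rw [show |((1-x)^2)⁻¹| = ((1-x)^2)⁻¹ from _root_.abs_of_nonneg (by positivity)]
    rw [show (((1-x)^2)⁻¹ : ℝ) • (((x/(1-x))^(α-1) / (1-x)⁻¹ : ℝ) : ℂ)
        = ((((1-x)^2)⁻¹ * ((x/(1-x))^(α-1) / (1-x)⁻¹) : ℝ) : ℂ) by
      rw [Complex.ofReal_mul, Complex.real_smul]]
    congr 1
    -- now a real computation
    have e1 : ((1-x)^2)⁻¹ = (1-x) ^ (-2 : ℝ) := by
      rw [show ((1-x):ℝ)^2 = (1-x) ^ ((2:ℕ):ℝ) from (Real.rpow_natCast _ 2).symm,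
        ← Real.rpow_neg hx1.le]
      norm_num
    have e3 : (x/(1-x))^(α-1) = x^(α-1) * (1-x) ^ (1-α) := by
      rw [Real.div_rpow hx0.le hx1.le, div_eq_mul_inv, ← Real.rpow_neg hx1.le]
      ring_nf
    have e4 : (1-x) ^ (-2:ℝ) * (1-x)^(1-α) * (1-x)^(1:ℝ) = (1-x)^(-α) := by
      rw [← Real.rpow_add hx1, ← Real.rpow_add hx1]
      congr 1
      ring
    rw [Real.rpow_one] at e4
    rw [e1, e3, div_inv_eq_mul]
    calc (1-x)^(-2:ℝ) * (x ^ (α-1) * (1-x)^(1-α) * (1-x))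
        = x ^ (α-1) * ((1-x)^(-2:ℝ) * (1-x)^(1-α) * (1-x)) := by ring
      _ = x ^ (α-1) * (1-x)^(-α) := by rw [e4]
  rw [setIntegral_congr_fun measurableSet_Ioo hpt]
  -- identify with betaIntegral
  have hbeta : Complex.betaIntegral (α:ℂ) (1 - α) =
      ∫ x in Ioo (0:ℝ) 1, ((x ^ (α-1) * (1-x) ^ (-α) : ℝ) : ℂ) := by
    rw [Complex.betaIntegral, intervalIntegral.integral_of_le zero_le_one,
      integral_Ioc_eq_integral_Ioo]
    apply setIntegral_congr_fun measurableSet_Ioo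
    intro x hx
    have hx0 : 0 < x := hx.1
    have hx1 : 0 ≤ 1 - x := by linarith [hx.2]
    simp only
    rw [cpow_ofReal_eq' α hx0.le]
    rw [show (1 - (x:ℂ)) = ((1 - x : ℝ) : ℂ) by push_cast; ring]
    rw [show (1 - (α:ℂ) - 1) = ((-α : ℝ) : ℂ) by push_cast; ring]
    rw [← Complex.ofReal_cpow hx1, ← Complex.ofReal_mul]
  rw [← hbeta]
  -- Gamma reflection
  have hre1 : 0 < Complex.re (α:ℂ) := by simpa using h0
  have hre2 : 0 < Complex.re (1 - (α:ℂ)) := by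
    simp only [Complex.sub_re, Complex.one_re, Complex.ofReal_re]; linarith
  have hg := Complex.Gamma_mul_Gamma_eq_betaIntegral hre1 hre2
  rw [show (α:ℂ) + (1 - α) = 1 by ring, Complex.Gamma_one, one_mul] at hg
  rw [← hg, Complex.Gamma_mul_Gamma_one_sub]
  rw [show ((Real.pi:ℂ) * α) = ((Real.pi * α : ℝ) : ℂ) by push_cast; ring,
    ← Complex.ofReal_sin]

lemma scaleI (α : ℝ) {x : ℝ} (hx : 0 < x) :
    ∫ y in Ioi (0:ℝ), (y:ℂ) ^ ((α:ℂ)-1) / ((y:ℂ) + x)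
      = (x:ℂ) ^ ((α:ℂ)-1) * ∫ t in Ioi (0:ℝ), (t:ℂ) ^ ((α:ℂ)-1) / ((t:ℂ) + 1) := by
  have hx' : (x:ℂ) ≠ 0 := Complex.ofReal_ne_zero.mpr (ne_of_gt hx)
  have hcomp := MeasureTheory.integral_comp_mul_left_Ioi
    (g := fun y : ℝ => (y:ℂ) ^ ((α:ℂ)-1) / ((y:ℂ) + x)) 0 hx
  rw [mul_zero] at hcomp
  -- rewrite the substituted integrand
  have hsub : ∀ t ∈ Ioi (0:ℝ),
      ((x * t : ℝ):ℂ) ^ ((α:ℂ)-1) / (((x * t : ℝ):ℂ) + x)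
        = ((x:ℂ) ^ ((α:ℂ)-1) * (x:ℂ)⁻¹) * ((t:ℂ) ^ ((α:ℂ)-1) / ((t:ℂ) + 1)) := by
    intro t ht
    simp only [mem_Ioi] at ht
    have ht' : (0:ℝ) ≤ t := le_of_lt ht
    rw [Complex.ofReal_mul, Complex.mul_cpow_ofReal_nonneg (le_of_lt hx) ht']
    have hden : ((x:ℂ) * t + x) = (x:ℂ) * ((t:ℂ) + 1) := by ring
    rw [hden]
    have h1t : ((t:ℂ) + 1) ≠ 0 := by
      intro h
      have : ((t + 1 : ℝ) : ℂ) = 0 := by push_cast; linear_combination h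
      rw [Complex.ofReal_eq_zero] at this
      linarith
    field_simp
  rw [setIntegral_congr_fun measurableSet_Ioi hsub] at hcomp
  rw [integral_const_mul] at hcomp
  -- hcomp : (x^(a) * x⁻¹) * J = x⁻¹ • ∫ y in Ioi 0, g y
  have := congrArg (fun w => (x:ℂ) * w) hcomp
  simp only [Complex.real_smul, smul_smul] at this
  rw [Complex.ofReal_inv] at this
  have hF : (x:ℂ) * ((x:ℂ)⁻¹ * ∫ y in Ioi (0:ℝ), (y:ℂ) ^ ((α:ℂ)-1) / ((y:ℂ) + x))
      = ∫ y in Ioi (0:ℝ), (y:ℂ) ^ ((α:ℂ)-1) / ((y:ℂ) + x) := by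
    rw [← mul_assoc, mul_inv_cancel₀ hx', one_mul]
  rw [hF] at this
  rw [← this]
  field_simp


lemma preconnSlit : IsPreconnected Complex.slitPlane := by
  have hc : ContractibleSpace Complex.slitPlane :=
    Complex.starConvex_one_slitPlane.contractibleSpace ⟨1, Complex.one_mem_slitPlane⟩
  have hp : IsPathConnected Complex.slitPlane :=
    isPathConnected_iff_pathConnectedSpace.mpr inferInstance
  exact hp.isConnected.isPreconnected

/-- For `α ∈ (0,1)` and `z ∉ (−∞,0]`,
`∫₀^∞ y^(α−1)/(y+z) dy = π z^(α−1)/sin(απ)` (principal branch). -/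
theorem stmt2 (α : ℝ) (hα : α ∈ Set.Ioo (0:ℝ) 1) (z : ℂ)
    (hz : ∀ x : ℝ, x ≤ 0 → z ≠ (x : ℂ)) :
    ∫ y in Set.Ioi (0:ℝ), (y : ℂ) ^ ((α : ℂ) - 1) / ((y : ℂ) + z)
      = (Real.pi : ℂ) * z ^ ((α : ℂ) - 1) / ((Real.sin (α * Real.pi) : ℝ) : ℂ) := by
  obtain ⟨h0, h1⟩ := hα
  set F : ℂ → ℂ := fun w => ∫ y in Set.Ioi (0:ℝ), (y : ℂ) ^ ((α : ℂ) - 1) / ((y : ℂ) + w)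
    with hF
  set G : ℂ → ℂ := fun w =>
    (Real.pi : ℂ) * w ^ ((α : ℂ) - 1) / ((Real.sin (α * Real.pi) : ℝ) : ℂ) with hG
  have hzslit : z ∈ Complex.slitPlane := by
    rw [Complex.mem_slitPlane_iff_not_le_zero]
    intro hle
    obtain ⟨hre, him⟩ := Complex.le_def.mp hle
    simp only [Complex.zero_re, Complex.zero_im] at hre him
    exact hz z.re hre (Complex.ext (by simp) (by simp [him]))
  have hFd : DifferentiableOn ℂ F Complex.slitPlane := diffF α h0 h1
  have hGd : DifferentiableOn ℂ G Complex.slitPlane := by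
    intro w hw
    apply DifferentiableAt.differentiableWithinAt
    apply DifferentiableAt.div_const
    exact (differentiableAt_id.cpow (differentiableAt_const _) hw).const_mul _
  have hFa := hFd.analyticOnNhd Complex.isOpen_slitPlane
  have hGa := hGd.analyticOnNhd Complex.isOpen_slitPlane
  have hagree : ∀ x : ℝ, 0 < x → F (x:ℂ) = G (x:ℂ) := by
    intro x hx
    rw [hF, hG]
    simp only
    rw [scaleI α hx, betaI α h0 h1, mul_comm α Real.pi]
    ring
  -- a sequence of positive reals tending to 1 within {1}ᶜ
  have hu : Filter.Tendsto (fun n : ℕ => ((1 + ((n:ℝ)+1)⁻¹ : ℝ) : ℂ)) Filter.atTop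
      (nhdsWithin (1:ℂ) {(1:ℂ)}ᶜ) := by
    apply tendsto_nhdsWithin_of_tendsto_nhds_of_eventually_within
    · have h1 : Filter.Tendsto (fun n : ℕ => (1 + ((n:ℝ)+1)⁻¹ : ℝ)) Filter.atTop (nhds 1) := by
        have := tendsto_one_div_add_atTop_nhds_zero_nat (𝕜 := ℝ)
        simp only [one_div] at this
        have h2 := this.const_add (1:ℝ)
        simpa using h2
      have h3 := (Complex.continuous_ofReal.tendsto (1:ℝ)).comp h1
      rw [Complex.ofReal_one] at h3
      exact h3
    · apply Filter.Eventually.of_forall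
      intro n
      simp only [Set.mem_compl_iff, Set.mem_singleton_iff]
      intro h
      have h' : (1 + ((n:ℝ)+1)⁻¹ : ℝ) = 1 := by exact_mod_cast h
      have : ((n:ℝ)+1)⁻¹ > 0 := by positivity
      linarith
  have hfreq : ∃ᶠ w in nhdsWithin (1:ℂ) {(1:ℂ)}ᶜ, F w = G w := by
    apply hu.frequently
    apply Filter.Frequently.of_forall
    intro n
    exact hagree _ (by positivity)
  have key := hFa.eqOn_of_preconnected_of_frequently_eq hGa preconnSlit
    Complex.one_mem_slitPlane hfreq
  exact key hzslit
end
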